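/- Let (N_t) be a Poisson process with rate J > 0 and let (S_k) be an independent random walk with i.i.d. bounded increments of positive mean μ, with |increments| ≤ B. Define T_L = inf{t ≥ 0 : S_{N_t} ≥ L}. Then there exists C₂ > 0 such that E[T_L] ≤ C₂·L for all L ≥ 1. -/

import Mathlib

open MeasureTheory ProbabilityTheory Filter Finset Set
open scoped ENNReal NNReal

/-- Quadratic upper bound on `exp` for small arguments. -/
lemma stmt15_exp_quad_aux {x : ℝ} (hx : |x| ≤ 1) : Real.exp x ≤ 1 + x + 3 / 4 * x ^ 2 := by
  have h := Real.exp_bound hx (by norm_num : 0 < 2)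
  have hs : ∑ i ∈ Finset.range 2, x ^ i / i.factorial = 1 + x := by
    simp [Finset.sum_range_succ]
  rw [hs] at h
  norm_num [Nat.factorial, sq_abs] at h
  have h3 := (abs_le.1 h).2
  nlinarith [sq_abs x, abs_nonneg x]

/-- Poisson lower-tail estimate: if `8K ≤ x` then `∑_{j<K} e^{-x} x^j/j! ≤ e^{-x/4}`. -/
lemma stmt15_pois_tail_aux (K : ℕ) (x : ℝ) (hx : 0 ≤ x) (h : 8 * K ≤ x) :
    ∑ j ∈ Finset.range K, Real.exp (-x) * x ^ j / j.factorial ≤ Real.exp (-x / 4) := by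
  have hterm : ∀ j : ℕ, x ^ j / j.factorial ≤ 2 ^ j * Real.exp (x / 2) := by
    intro j
    have h1 : (x / 2) ^ j / j.factorial ≤ Real.exp (x / 2) := by
      calc (x / 2) ^ j / j.factorial
          ≤ ∑ i ∈ Finset.range (j + 1), (x / 2) ^ i / i.factorial := by
            refine Finset.single_le_sum (f := fun i => (x / 2) ^ i / i.factorial) ?_ ?_
            · intro i _; positivity
            · simp
        _ ≤ Real.exp (x / 2) := Real.sum_le_exp_of_nonneg (by positivity) _
    have h2 : x ^ j = 2 ^ j * (x / 2) ^ j := by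
      rw [← mul_pow]; ring_nf
    rw [h2]
    calc 2 ^ j * (x / 2) ^ j / j.factorial = 2 ^ j * ((x / 2) ^ j / j.factorial) := by ring
      _ ≤ 2 ^ j * Real.exp (x / 2) := by
          have : (0:ℝ) ≤ 2 ^ j := by positivity
          nlinarith [h1, this]
  have hsum2 : ∑ j ∈ Finset.range K, (2:ℝ) ^ j ≤ Real.exp K := by
    have hg : ∑ j ∈ Finset.range K, (2:ℝ) ^ j = 2 ^ K - 1 := by
      have := geom_sum_eq (by norm_num : (2:ℝ) ≠ 1) K
      rw [this]; norm_num
    have h2e : (2:ℝ) ≤ Real.exp 1 := by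
      have := Real.add_one_le_exp 1; linarith
    have : (2:ℝ) ^ K ≤ Real.exp 1 ^ K := pow_le_pow_left₀ (by norm_num) h2e K
    rw [hg]
    calc (2:ℝ) ^ K - 1 ≤ Real.exp 1 ^ K := by linarith
      _ = Real.exp K := by rw [← Real.exp_nat_mul]; ring_nf
  calc ∑ j ∈ Finset.range K, Real.exp (-x) * x ^ j / j.factorial
      = Real.exp (-x) * ∑ j ∈ Finset.range K, x ^ j / j.factorial := by
        rw [Finset.mul_sum]; apply Finset.sum_congr rfl; intro j _; ring
    _ ≤ Real.exp (-x) * (Real.exp (x / 2) * ∑ j ∈ Finset.range K, (2:ℝ) ^ j) := by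
        refine mul_le_mul_of_nonneg_left ?_ (Real.exp_nonneg _)
        rw [Finset.mul_sum]
        refine Finset.sum_le_sum fun j _ => ?_
        calc x ^ j / j.factorial ≤ 2 ^ j * Real.exp (x / 2) := hterm j
          _ = Real.exp (x / 2) * 2 ^ j := by ring
    _ ≤ Real.exp (-x) * (Real.exp (x / 2) * Real.exp K) := by
        refine mul_le_mul_of_nonneg_left ?_ (Real.exp_nonneg _)
        exact mul_le_mul_of_nonneg_left hsum2 (Real.exp_nonneg _)
    _ = Real.exp (-x + x / 2 + K) := by rw [← Real.exp_add, ← Real.exp_add]; ring_nf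
    _ ≤ Real.exp (-x / 4) := by
        apply Real.exp_le_exp.2
        linarith

/-- Bound on the mgf (at a small negative argument) of a bounded random variable with
positive mean. -/
lemma stmt15_mgf_one_aux {Ω : Type*} [MeasureSpace Ω] [IsProbabilityMeasure (ℙ : Measure Ω)]
    (Y : Ω → ℝ) (hYm : Measurable Y) (B μ t₀ : ℝ) (hb : ∀ ω, |Y ω| ≤ B)
    (hm : ∫ ω, Y ω ∂ℙ = μ) (ht₀ : 0 ≤ t₀) (h1 : t₀ * B ≤ 1) (h2 : 3 / 4 * t₀ * B ^ 2 ≤ μ / 2) :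
    mgf Y ℙ (-t₀) ≤ Real.exp (-(t₀ * μ) / 2) := by
  have hYint : Integrable Y ℙ := by
    refine Integrable.mono' (integrable_const B) hYm.aestronglyMeasurable ?_
    exact Filter.Eventually.of_forall fun ω => by simpa using hb ω
  have hY2int : Integrable (fun ω => (Y ω) ^ 2) ℙ := by
    refine Integrable.mono' (integrable_const (B ^ 2)) (hYm.pow_const 2).aestronglyMeasurable ?_
    refine Filter.Eventually.of_forall fun ω => ?_
    simp only [Real.norm_eq_abs, abs_pow, sq_abs]
    nlinarith [hb ω, abs_nonneg (Y ω), sq_abs (Y ω)]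
  have hexp_int : Integrable (fun ω => Real.exp (-t₀ * Y ω)) ℙ := by
    refine Integrable.mono' (integrable_const (Real.exp (t₀ * B)))
      ((hYm.const_mul (-t₀)).exp).aestronglyMeasurable ?_
    refine Filter.Eventually.of_forall fun ω => ?_
    rw [Real.norm_eq_abs, abs_of_pos (Real.exp_pos _)]
    apply Real.exp_le_exp.2
    calc -t₀ * Y ω ≤ t₀ * |Y ω| := by
          rcases le_or_gt 0 (Y ω) with h | h
          · nlinarith [abs_nonneg (Y ω)]
          · rw [abs_of_neg h]; nlinarith
      _ ≤ t₀ * B := mul_le_mul_of_nonneg_left (hb ω) ht₀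
  have hpt : ∀ ω, Real.exp (-t₀ * Y ω) ≤ 1 + (-t₀) * Y ω + 3 / 4 * t₀ ^ 2 * (Y ω) ^ 2 := by
    intro ω
    have habs : |(-t₀) * Y ω| ≤ 1 := by
      rw [abs_mul, abs_neg, abs_of_nonneg ht₀]
      calc t₀ * |Y ω| ≤ t₀ * B := mul_le_mul_of_nonneg_left (hb ω) ht₀
        _ ≤ 1 := h1
    have := stmt15_exp_quad_aux habs
    calc Real.exp (-t₀ * Y ω) ≤ 1 + (-t₀) * Y ω + 3 / 4 * ((-t₀) * Y ω) ^ 2 := this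
      _ = 1 + (-t₀) * Y ω + 3 / 4 * t₀ ^ 2 * (Y ω) ^ 2 := by ring
  have hint_rhs : Integrable (fun ω => 1 + (-t₀) * Y ω + 3 / 4 * t₀ ^ 2 * (Y ω) ^ 2) ℙ :=
    ((integrable_const 1).add (hYint.const_mul (-t₀))).add (hY2int.const_mul _)
  have hY2le : ∫ ω, (Y ω) ^ 2 ∂ℙ ≤ B ^ 2 := by
    calc ∫ ω, (Y ω) ^ 2 ∂ℙ ≤ ∫ _ω, B ^ 2 ∂ℙ := by
          refine integral_mono hY2int (integrable_const _) fun ω => ?_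
          nlinarith [hb ω, abs_nonneg (Y ω), sq_abs (Y ω)]
      _ = B ^ 2 := by simp
  have hmgf : mgf Y ℙ (-t₀) = ∫ ω, Real.exp (-t₀ * Y ω) ∂ℙ := rfl
  calc mgf Y ℙ (-t₀) = ∫ ω, Real.exp (-t₀ * Y ω) ∂ℙ := hmgf
    _ ≤ ∫ ω, (1 + (-t₀) * Y ω + 3 / 4 * t₀ ^ 2 * (Y ω) ^ 2) ∂ℙ :=
        integral_mono hexp_int hint_rhs hpt
    _ = 1 + (-t₀) * μ + 3 / 4 * t₀ ^ 2 * ∫ ω, (Y ω) ^ 2 ∂ℙ := by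
        have e1 : ∫ ω, (1 + (-t₀) * Y ω + 3 / 4 * t₀ ^ 2 * (Y ω) ^ 2) ∂ℙ
            = (∫ ω, (1 + (-t₀) * Y ω) ∂ℙ) + ∫ ω, 3 / 4 * t₀ ^ 2 * (Y ω) ^ 2 ∂ℙ :=
          integral_add ((integrable_const 1).add (hYint.const_mul (-t₀))) (hY2int.const_mul _)
        have e2 : ∫ ω, (1 + (-t₀) * Y ω) ∂ℙ = (∫ _ω, (1:ℝ) ∂ℙ) + ∫ ω, (-t₀) * Y ω ∂ℙ :=
          integral_add (integrable_const 1) (hYint.const_mul (-t₀))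
        rw [e1, e2, integral_const_mul, integral_const_mul, hm]
        simp
    _ ≤ 1 + ((-t₀) * μ + 3 / 4 * t₀ ^ 2 * B ^ 2) := by
        have : 3 / 4 * t₀ ^ 2 * ∫ ω, (Y ω) ^ 2 ∂ℙ ≤ 3 / 4 * t₀ ^ 2 * B ^ 2 :=
          mul_le_mul_of_nonneg_left hY2le (by positivity)
        linarith
    _ ≤ Real.exp ((-t₀) * μ + 3 / 4 * t₀ ^ 2 * B ^ 2) := by
        have := Real.add_one_le_exp ((-t₀) * μ + 3 / 4 * t₀ ^ 2 * B ^ 2)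
        linarith
    _ ≤ Real.exp (-(t₀ * μ) / 2) := by
        apply Real.exp_le_exp.2
        nlinarith [h2, ht₀]

set_option maxHeartbeats 1000000 in
/-- Let `(N_t)` be a Poisson process with rate `J > 0` (monotone integer-valued paths with
Poisson marginals) and let `(S_k)` be an independent random walk with i.i.d. bounded increments
of positive mean `μ`, `|increments| ≤ B`.  Define `T_L = inf {t ≥ 0 : S_{N_t} ≥ L}`.  Then there
exists `C₂ > 0` such that `E[T_L] ≤ C₂ L` for all `L ≥ 1`. -/
theorem stmt15 {Ω : Type*} [MeasureSpace Ω] [IsProbabilityMeasure (ℙ : Measure Ω)]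
    (J B μ : ℝ) (hJ : 0 < J) (hμ : 0 < μ)
    (N : ℝ → Ω → ℕ)
    (hNmeas : ∀ t, Measurable (N t))
    (hNmono : ∀ ω, Monotone fun t => N t ω)
    (hN0 : ∀ ω, N 0 ω = 0)
    (hNlaw : ∀ t : ℝ, 0 ≤ t → ∀ n : ℕ,
      ℙ {ω | N t ω = n} = ENNReal.ofReal (Real.exp (-J * t) * (J * t) ^ n / n.factorial))
    (X : ℕ → Ω → ℝ)
    (hXmeas : ∀ i, Measurable (X i))
    (hXindep : iIndepFun X ℙ)
    (hXident : ∀ i, Measure.map (X i) ℙ = Measure.map (X 0) ℙ)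
    (hXbound : ∀ i ω, |X i ω| ≤ B)
    (hXmean : ∫ ω, X 0 ω ∂ℙ = μ)
    -- the Poisson process and the random walk increments are independent
    (hNX : IndepFun (fun ω => fun t : ℝ => N t ω) (fun ω => fun i : ℕ => X i ω) ℙ) :
    ∃ C₂ : ℝ, 0 < C₂ ∧ ∀ L : ℝ, 1 ≤ L →
      (∫⁻ ω, ENNReal.ofReal
          (sInf {t : ℝ | 0 ≤ t ∧ L ≤ ∑ i ∈ Finset.range (N t ω), X i ω}) ∂ℙ)
        ≤ ENNReal.ofReal (C₂ * L) := by
  classical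
  -- basic facts
  have hXint : Integrable (X 0) ℙ := by
    refine Integrable.mono' (integrable_const B) (hXmeas 0).aestronglyMeasurable ?_
    exact Filter.Eventually.of_forall fun ω => by simpa using hXbound 0 ω
  have hμB : μ ≤ B := by
    rw [← hXmean]
    calc ∫ ω, X 0 ω ∂ℙ ≤ ∫ _ω, B ∂ℙ :=
          integral_mono hXint (integrable_const B) fun ω => (le_abs_self _).trans (hXbound 0 ω)
      _ = B := by simp
  have hB : 0 < B := lt_of_lt_of_le hμ hμB
  -- the Chernoff parameter
  set t₀ : ℝ := min (2 * μ / (3 * B ^ 2)) (1 / B) with ht₀def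
  have ht₀pos : 0 < t₀ := lt_min (by positivity) (by positivity)
  have ht₀B : t₀ * B ≤ 1 := by
    have h := min_le_right (2 * μ / (3 * B ^ 2)) (1 / B)
    calc t₀ * B ≤ (1 / B) * B := mul_le_mul_of_nonneg_right h hB.le
      _ = 1 := by field_simp
  have ht₀μ : 3 / 4 * t₀ * B ^ 2 ≤ μ / 2 := by
    have h := min_le_left (2 * μ / (3 * B ^ 2)) (1 / B)
    have hB2 : (0:ℝ) < B ^ 2 := by positivity
    have : t₀ * B ^ 2 ≤ 2 * μ / 3 := by
      calc t₀ * B ^ 2 ≤ (2 * μ / (3 * B ^ 2)) * B ^ 2 := mul_le_mul_of_nonneg_right h hB2.le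
        _ = 2 * μ / 3 := by field_simp
    linarith
  have hmgf0 : mgf (X 0) ℙ (-t₀) ≤ Real.exp (-(t₀ * μ) / 2) :=
    stmt15_mgf_one_aux (X 0) (hXmeas 0) B μ t₀ (hXbound 0) hXmean ht₀pos.le ht₀B ht₀μ
  set c : ℝ := t₀ * μ / 4 with hcdef
  have hcpos : 0 < c := by positivity
  -- identical mgf's
  have hmgfi : ∀ i : ℕ, mgf (X i) ℙ (-t₀) = mgf (X 0) ℙ (-t₀) := by
    intro i
    have hg : Continuous fun x : ℝ => Real.exp (-t₀ * x) :=
      Real.continuous_exp.comp (continuous_const.mul continuous_id)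
    have e : ∀ j : ℕ, mgf (X j) ℙ (-t₀) = ∫ x, Real.exp (-t₀ * x) ∂(Measure.map (X j) ℙ) := by
      intro j
      exact (integral_map (hXmeas j).aemeasurable hg.aestronglyMeasurable).symm
    rw [e i, e 0, hXident i]
  -- Chernoff bound for the random walk
  have hchern : ∀ (L : ℝ) (k : ℕ), 4 * L ≤ k * μ →
      ℙ {ω | (∑ i ∈ Finset.range k, X i ω) ≤ L} ≤ ENNReal.ofReal (Real.exp (-c)) ^ k := by
    intro L k hkL
    have hSmeas : Measurable fun ω => ∑ i ∈ Finset.range k, X i ω :=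
      Finset.measurable_sum _ fun i _ => hXmeas i
    have hSbnd : ∀ ω, -(k * B) ≤ ∑ i ∈ Finset.range k, X i ω := by
      intro ω
      have h1 : |∑ i ∈ Finset.range k, X i ω| ≤ ∑ i ∈ Finset.range k, |X i ω| :=
        Finset.abs_sum_le_sum_abs _ _
      have h2 : ∑ i ∈ Finset.range k, |X i ω| ≤ ∑ _i ∈ Finset.range k, B :=
        Finset.sum_le_sum fun i _ => hXbound i ω
      have h3 : ∑ _i ∈ Finset.range k, B = k * B := by
        rw [Finset.sum_const, Finset.card_range]; simp [nsmul_eq_mul]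
      have := (abs_le.1 ((h1.trans h2).trans_eq h3)).1
      linarith
    have h_int : Integrable (fun ω => Real.exp (-t₀ * ∑ i ∈ Finset.range k, X i ω)) ℙ := by
      refine Integrable.mono' (integrable_const (Real.exp (t₀ * (k * B))))
        ((hSmeas.const_mul (-t₀)).exp).aestronglyMeasurable ?_
      refine Filter.Eventually.of_forall fun ω => ?_
      rw [Real.norm_eq_abs, abs_of_pos (Real.exp_pos _)]
      apply Real.exp_le_exp.2
      nlinarith [hSbnd ω, ht₀pos.le]
    have hch := measure_le_le_exp_mul_mgf (μ := ℙ)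
      (X := fun ω => ∑ i ∈ Finset.range k, X i ω) L (by linarith : -t₀ ≤ 0) h_int
    have hfun : (fun ω => ∑ i ∈ Finset.range k, X i ω) = (∑ i ∈ Finset.range k, X i) := by
      funext ω; simp
    have hmgfsum : mgf (fun ω => ∑ i ∈ Finset.range k, X i ω) ℙ (-t₀)
        = (mgf (X 0) ℙ (-t₀)) ^ k := by
      rw [hfun, hXindep.mgf_sum hXmeas]
      rw [Finset.prod_congr rfl fun i _ => hmgfi i, Finset.prod_const, Finset.card_range]
    have hmain : (ℙ {ω | (∑ i ∈ Finset.range k, X i ω) ≤ L}).toReal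
        ≤ Real.exp (-c) ^ k := by
      calc (ℙ {ω | (∑ i ∈ Finset.range k, X i ω) ≤ L}).toReal
          ≤ Real.exp (-(-t₀) * L) * mgf (fun ω => ∑ i ∈ Finset.range k, X i ω) ℙ (-t₀) := hch
        _ = Real.exp (t₀ * L) * (mgf (X 0) ℙ (-t₀)) ^ k := by rw [hmgfsum]; ring_nf
        _ ≤ Real.exp (t₀ * L) * (Real.exp (-(t₀ * μ) / 2)) ^ k := by
            refine mul_le_mul_of_nonneg_left ?_ (Real.exp_nonneg _)
            exact pow_le_pow_left₀ mgf_nonneg hmgf0 k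
        _ = Real.exp (t₀ * L + k * (-(t₀ * μ) / 2)) := by
            rw [← Real.exp_nat_mul, ← Real.exp_add]
        _ ≤ Real.exp (k * (-c)) := by
            apply Real.exp_le_exp.2
            have hk : 0 ≤ (k:ℝ) := Nat.cast_nonneg k
            have h4 : t₀ * (4 * L) ≤ t₀ * (k * μ) := mul_le_mul_of_nonneg_left hkL ht₀pos.le
            rw [hcdef]; nlinarith
        _ = Real.exp (-c) ^ k := Real.exp_nat_mul _ _
    calc ℙ {ω | (∑ i ∈ Finset.range k, X i ω) ≤ L}
        = ENNReal.ofReal (ℙ {ω | (∑ i ∈ Finset.range k, X i ω) ≤ L}).toReal :=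
          (ENNReal.ofReal_toReal (measure_ne_top _ _)).symm
      _ ≤ ENNReal.ofReal (Real.exp (-c) ^ k) := ENNReal.ofReal_le_ofReal hmain
      _ = ENNReal.ofReal (Real.exp (-c)) ^ k := ENNReal.ofReal_pow (Real.exp_nonneg _) k
  -- Poisson tail bound
  have hpois : ∀ (n K : ℕ), 8 * (K:ℝ) ≤ J * n →
      ℙ {ω | N (n:ℝ) ω < K} ≤ ENNReal.ofReal (Real.exp (-(J / 4))) ^ n := by
    intro n K hK
    have hx : (0:ℝ) ≤ J * n := by positivity
    have hset : {ω | N (n:ℝ) ω < K} = ⋃ j ∈ Finset.range K, {ω | N (n:ℝ) ω = j} := by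
      ext ω
      simp only [Set.mem_setOf_eq, Set.mem_iUnion, Finset.mem_range, exists_prop]
      exact ⟨fun h => ⟨N (n:ℝ) ω, h, rfl⟩, fun ⟨j, hj, he⟩ => he ▸ hj⟩
    have hdisj : Set.PairwiseDisjoint (↑(Finset.range K)) (fun j => {ω | N (n:ℝ) ω = j}) := by
      intro a _ b _ hab
      refine Set.disjoint_left.2 fun ω ha hb => hab ?_
      rw [← ha, ← hb]
    have hmeasj : ∀ j ∈ Finset.range K, MeasurableSet {ω | N (n:ℝ) ω = j} := fun j _ =>
      (hNmeas (n:ℝ)) (measurableSet_singleton j)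
    rw [hset, measure_biUnion_finset hdisj hmeasj]
    have he : ∀ j ∈ Finset.range K, ℙ {ω | N (n:ℝ) ω = j}
        = ENNReal.ofReal (Real.exp (-(J * n)) * (J * n) ^ j / j.factorial) := by
      intro j _
      rw [hNlaw (n:ℝ) (Nat.cast_nonneg n) j]
      congr 2
      ring_nf
    rw [Finset.sum_congr rfl he, ← ENNReal.ofReal_sum_of_nonneg]
    · calc ENNReal.ofReal (∑ j ∈ Finset.range K, Real.exp (-(J * n)) * (J * n) ^ j / j.factorial)
          ≤ ENNReal.ofReal (Real.exp (-(J * n) / 4)) :=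
            ENNReal.ofReal_le_ofReal (stmt15_pois_tail_aux K (J * n) hx hK)
        _ = ENNReal.ofReal (Real.exp (-(J / 4))) ^ n := by
            rw [← ENNReal.ofReal_pow (Real.exp_nonneg _), ← Real.exp_nat_mul]
            congr 1
            ring_nf
    · intro j _
      positivity
  -- the constant
  obtain ⟨d, hddef⟩ : ∃ d : ℝ, d = (1 - Real.exp (-(J / 4)))⁻¹
      + Real.exp c * ((1 - Real.exp (-c))⁻¹ * (1 - Real.exp (-(c * J / 8)))⁻¹) := ⟨_, rfl⟩
  have hexplt : ∀ a : ℝ, 0 < a → Real.exp (-a) < 1 := fun a ha =>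
    Real.exp_lt_one_iff.2 (by linarith)
  have hd1 : (0:ℝ) < 1 - Real.exp (-(J / 4)) := by
    have := hexplt (J / 4) (by linarith); linarith
  have hd2 : (0:ℝ) < 1 - Real.exp (-c) := by have := hexplt c hcpos; linarith
  have hd3 : (0:ℝ) < 1 - Real.exp (-(c * J / 8)) := by
    have := hexplt (c * J / 8) (by positivity); linarith
  have hdpos : 0 < d := by
    rw [hddef]; positivity
  -- conversion lemma for geometric sums in ℝ≥0∞
  have hconv : ∀ a : ℝ, 0 < a →
      (1 - ENNReal.ofReal (Real.exp (-a)))⁻¹ = ENNReal.ofReal ((1 - Real.exp (-a))⁻¹) := by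
    intro a ha
    have h1 : (1:ℝ≥0∞) - ENNReal.ofReal (Real.exp (-a)) = ENNReal.ofReal (1 - Real.exp (-a)) := by
      rw [ENNReal.ofReal_sub _ (Real.exp_nonneg _), ENNReal.ofReal_one]
    rw [h1, ← ENNReal.ofReal_inv_of_pos]
    have := hexplt a ha; linarith
  refine ⟨32 / (J * μ) + 16 / J + 1 + d, by positivity, ?_⟩
  intro L hL
  set k₀ : ℕ := ⌈4 * L / μ⌉₊ with hk₀def
  set n₁ : ℕ := ⌈8 * ((k₀:ℝ) + 1) / J⌉₊ with hn₁def
  -- the events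
  set An : ℕ → Set Ω := fun n => {ω | (∑ i ∈ Finset.range (N (n:ℝ) ω), X i ω) < L} with hAndef
  have hAnmeas : ∀ n, MeasurableSet (An n) := by
    intro n
    have hF : Measurable fun p : Ω × ℕ => ∑ i ∈ Finset.range p.2, X i p.1 := by
      apply measurable_from_prod_countable_left
      intro k
      show Measurable fun ω : Ω => ∑ i ∈ Finset.range k, X i ω
      exact Finset.measurable_sum _ fun i _ => hXmeas i
    have hg : Measurable fun ω => ∑ i ∈ Finset.range (N (n:ℝ) ω), X i ω :=
      hF.comp (measurable_id.prodMk (hNmeas (n:ℝ)))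
    exact measurableSet_lt hg measurable_const
  -- Step 1 : pointwise bound of the hitting time by a sum of indicators
  have hstep1 : (∫⁻ ω, ENNReal.ofReal
      (sInf {t : ℝ | 0 ≤ t ∧ L ≤ ∑ i ∈ Finset.range (N t ω), X i ω}) ∂ℙ)
      ≤ ∑' n : ℕ, ℙ (An n) := by
    have hpt : ∀ ω, ENNReal.ofReal
        (sInf {t : ℝ | 0 ≤ t ∧ L ≤ ∑ i ∈ Finset.range (N t ω), X i ω})
        ≤ ∑' n : ℕ, (An n).indicator (fun _ => (1:ℝ≥0∞)) ω := by
      intro ω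
      by_cases hex : ∃ n : ℕ, ω ∉ An n
      · set n := Nat.find hex with hn
        have hnot := Nat.find_spec hex
        have hmem : (n:ℝ) ∈ {t : ℝ | 0 ≤ t ∧ L ≤ ∑ i ∈ Finset.range (N t ω), X i ω} := by
          refine ⟨Nat.cast_nonneg n, ?_⟩
          have : ¬ ((∑ i ∈ Finset.range (N ((n:ℕ):ℝ) ω), X i ω) < L) := hnot
          linarith [not_lt.1 this]
        have hbdd : BddBelow {t : ℝ | 0 ≤ t ∧ L ≤ ∑ i ∈ Finset.range (N t ω), X i ω} :=
          ⟨0, fun t ht => ht.1⟩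
        have hinf : sInf {t : ℝ | 0 ≤ t ∧ L ≤ ∑ i ∈ Finset.range (N t ω), X i ω} ≤ n :=
          csInf_le hbdd hmem
        calc ENNReal.ofReal (sInf {t : ℝ | 0 ≤ t ∧ L ≤ ∑ i ∈ Finset.range (N t ω), X i ω})
            ≤ ENNReal.ofReal (n:ℝ) := ENNReal.ofReal_le_ofReal hinf
          _ = (n : ℝ≥0∞) := ENNReal.ofReal_natCast n
          _ = ∑ j ∈ Finset.range n, (An j).indicator (fun _ => (1:ℝ≥0∞)) ω := by
              have : ∀ j ∈ Finset.range n, (An j).indicator (fun _ => (1:ℝ≥0∞)) ω = 1 := by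
                intro j hj
                have hj' : ω ∈ An j := by
                  by_contra hc
                  exact Nat.find_min hex (Finset.mem_range.1 hj) hc
                simp [Set.indicator_of_mem hj']
              rw [Finset.sum_congr rfl this, Finset.sum_const, Finset.card_range]
              simp
          _ ≤ ∑' j : ℕ, (An j).indicator (fun _ => (1:ℝ≥0∞)) ω := ENNReal.sum_le_tsum _
      · push_neg at hex
        have : ∑' n : ℕ, (An n).indicator (fun _ => (1:ℝ≥0∞)) ω = ⊤ := by
          have he : ∀ n : ℕ, (An n).indicator (fun _ => (1:ℝ≥0∞)) ω = 1 := fun n => by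
            simp [Set.indicator_of_mem (hex n)]
          rw [tsum_congr he]
          exact ENNReal.tsum_const_eq_top_of_ne_zero one_ne_zero
        rw [this]
        exact le_top
    calc (∫⁻ ω, ENNReal.ofReal
        (sInf {t : ℝ | 0 ≤ t ∧ L ≤ ∑ i ∈ Finset.range (N t ω), X i ω}) ∂ℙ)
        ≤ ∫⁻ ω, ∑' n : ℕ, (An n).indicator (fun _ => (1:ℝ≥0∞)) ω ∂ℙ := lintegral_mono hpt
      _ = ∑' n : ℕ, ∫⁻ ω, (An n).indicator (fun _ => (1:ℝ≥0∞)) ω ∂ℙ :=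
          lintegral_tsum fun n => ((measurable_one.indicator (hAnmeas n)).aemeasurable)
      _ = ∑' n : ℕ, ℙ (An n) := by
          refine tsum_congr fun n => ?_
          exact lintegral_indicator_one (hAnmeas n)
  -- geometric quantities
  set q₁ : ℝ≥0∞ := ENNReal.ofReal (Real.exp (-(J / 4))) with hq₁def
  set q₂ : ℝ≥0∞ := ENNReal.ofReal (Real.exp (-c)) with hq₂def
  set q₃ : ℝ≥0∞ := ENNReal.ofReal (Real.exp (-(c * J / 8))) with hq₃def
  set g : ℕ → ℝ≥0∞ :=
    fun n => q₁ ^ n + (ENNReal.ofReal (Real.exp c) * (1 - q₂)⁻¹) * q₃ ^ n with hgdef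
  -- Step 2 : for n ≥ n₁ the probability of Aₙ is bounded by g n
  have hstep2 : ∀ n : ℕ, n₁ ≤ n → ℙ (An n) ≤ g n := by
    intro n hn
    set Kn : ℕ := ⌊J * n / 8⌋₊ with hKndef
    have hxpos : (0:ℝ) ≤ J * n / 8 := by positivity
    have hK8 : 8 * (Kn:ℝ) ≤ J * n := by
      have := Nat.floor_le hxpos
      rw [hKndef] at *
      linarith [this]
    have hn₁le : 8 * ((k₀:ℝ) + 1) / J ≤ (n₁:ℝ) := Nat.le_ceil _
    have hnn : (n₁:ℝ) ≤ (n:ℝ) := Nat.cast_le.2 hn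
    have hKge : k₀ + 1 ≤ Kn := by
      rw [hKndef]
      apply Nat.le_floor
      push_cast
      rw [div_le_iff₀ hJ] at hn₁le
      have hJn : 8 * ((k₀:ℝ) + 1) ≤ J * n := by
        calc 8 * ((k₀:ℝ) + 1) ≤ (n₁:ℝ) * J := hn₁le
          _ ≤ (n:ℝ) * J := mul_le_mul_of_nonneg_right hnn hJ.le
          _ = J * n := by ring
      linarith
    have hk₀le : 4 * L / μ ≤ (k₀:ℝ) := Nat.le_ceil _
    -- inclusion
    have hsub : An n ⊆ {ω | N (n:ℝ) ω < Kn}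
        ∪ ⋃ m : ℕ, {ω | (∑ i ∈ Finset.range (Kn + m), X i ω) ≤ L} := by
      intro ω hω
      rcases lt_or_ge (N (n:ℝ) ω) Kn with h | h
      · exact Or.inl h
      · refine Or.inr (Set.mem_iUnion.2 ⟨N (n:ℝ) ω - Kn, ?_⟩)
        have he : Kn + (N (n:ℝ) ω - Kn) = N (n:ℝ) ω := Nat.add_sub_cancel' h
        have hω' : (∑ i ∈ Finset.range (N (n:ℝ) ω), X i ω) < L := hω
        show (∑ i ∈ Finset.range (Kn + (N (n:ℝ) ω - Kn)), X i ω) ≤ L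
        rw [he]
        exact hω'.le
    have hchern' : ∀ m : ℕ, ℙ {ω | (∑ i ∈ Finset.range (Kn + m), X i ω) ≤ L}
        ≤ q₂ ^ (Kn + m) := by
      intro m
      apply hchern
      have hkk : (k₀:ℝ) ≤ ((Kn + m : ℕ):ℝ) := by
        push_cast
        have : (k₀:ℝ) + 1 ≤ (Kn:ℝ) := by exact_mod_cast hKge
        have hm0 : (0:ℝ) ≤ (m:ℝ) := Nat.cast_nonneg m
        linarith
      show 4 * L ≤ ((Kn + m : ℕ):ℝ) * μ
      calc (4:ℝ) * L = (4 * L / μ) * μ := by field_simp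
        _ ≤ (k₀:ℝ) * μ := mul_le_mul_of_nonneg_right hk₀le hμ.le
        _ ≤ ((Kn + m : ℕ):ℝ) * μ := mul_le_mul_of_nonneg_right hkk hμ.le
    have htail : ∑' m : ℕ, ℙ {ω | (∑ i ∈ Finset.range (Kn + m), X i ω) ≤ L}
        ≤ q₂ ^ Kn * (1 - q₂)⁻¹ := by
      calc ∑' m : ℕ, ℙ {ω | (∑ i ∈ Finset.range (Kn + m), X i ω) ≤ L}
          ≤ ∑' m : ℕ, q₂ ^ (Kn + m) := ENNReal.tsum_le_tsum hchern'
        _ = ∑' m : ℕ, q₂ ^ Kn * q₂ ^ m := by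
            refine tsum_congr fun m => ?_
            rw [pow_add]
        _ = q₂ ^ Kn * ∑' m : ℕ, q₂ ^ m := ENNReal.tsum_mul_left
        _ = q₂ ^ Kn * (1 - q₂)⁻¹ := by rw [ENNReal.tsum_geometric]
    have hq₂Kn : q₂ ^ Kn ≤ ENNReal.ofReal (Real.exp c) * q₃ ^ n := by
      have hfloor : J * n / 8 - 1 < (Kn:ℝ) := Nat.sub_one_lt_floor _
      have hre : Real.exp (-c) ^ Kn ≤ Real.exp c * Real.exp (-(c * J / 8)) ^ n := by
        rw [← Real.exp_nat_mul, ← Real.exp_nat_mul, ← Real.exp_add]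
        apply Real.exp_le_exp.2
        have hmul : c * (J * n / 8 - 1) ≤ c * (Kn:ℝ) :=
          mul_le_mul_of_nonneg_left hfloor.le hcpos.le
        have : -c * ((Kn:ℝ)) ≤ c - c * (J * n / 8) := by linarith
        calc (Kn:ℝ) * (-c) = -c * (Kn:ℝ) := by ring
          _ ≤ c - c * (J * n / 8) := this
          _ = c + (n:ℝ) * (-(c * J / 8)) := by ring
      calc q₂ ^ Kn = ENNReal.ofReal (Real.exp (-c) ^ Kn) := by
            rw [hq₂def, ENNReal.ofReal_pow (Real.exp_nonneg _)]
        _ ≤ ENNReal.ofReal (Real.exp c * Real.exp (-(c * J / 8)) ^ n) :=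
            ENNReal.ofReal_le_ofReal hre
        _ = ENNReal.ofReal (Real.exp c) * q₃ ^ n := by
            rw [ENNReal.ofReal_mul (Real.exp_nonneg _), hq₃def,
              ENNReal.ofReal_pow (Real.exp_nonneg _)]
    calc ℙ (An n) ≤ ℙ ({ω | N (n:ℝ) ω < Kn}
          ∪ ⋃ m : ℕ, {ω | (∑ i ∈ Finset.range (Kn + m), X i ω) ≤ L}) := measure_mono hsub
      _ ≤ ℙ {ω | N (n:ℝ) ω < Kn}
          + ℙ (⋃ m : ℕ, {ω | (∑ i ∈ Finset.range (Kn + m), X i ω) ≤ L}) := measure_union_le _ _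
      _ ≤ ℙ {ω | N (n:ℝ) ω < Kn}
          + ∑' m : ℕ, ℙ {ω | (∑ i ∈ Finset.range (Kn + m), X i ω) ≤ L} := by
          exact add_le_add_right (measure_iUnion_le _) _
      _ ≤ q₁ ^ n + q₂ ^ Kn * (1 - q₂)⁻¹ := add_le_add (hpois n Kn hK8) htail
      _ ≤ q₁ ^ n + (ENNReal.ofReal (Real.exp c) * q₃ ^ n) * (1 - q₂)⁻¹ :=
          add_le_add_right (mul_le_mul_left hq₂Kn _) _
      _ = g n := by rw [hgdef]; ring
  -- Step 3 : summing everything up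
  have hsum : ∑' n : ℕ, ℙ (An n) ≤ (n₁ : ℝ≥0∞)
      + ((1 - q₁)⁻¹ + (ENNReal.ofReal (Real.exp c) * (1 - q₂)⁻¹) * (1 - q₃)⁻¹) := by
    rw [← Summable.sum_add_tsum_nat_add' (f := fun n => ℙ (An n)) (k := n₁) ENNReal.summable]
    have h1 : ∑ n ∈ Finset.range n₁, ℙ (An n) ≤ (n₁ : ℝ≥0∞) := by
      calc ∑ n ∈ Finset.range n₁, ℙ (An n) ≤ ∑ _n ∈ Finset.range n₁, 1 :=
            Finset.sum_le_sum fun n _ => prob_le_one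
        _ = (n₁ : ℝ≥0∞) := by rw [Finset.sum_const, Finset.card_range]; simp
    have h2 : ∑' m : ℕ, ℙ (An (m + n₁))
        ≤ (1 - q₁)⁻¹ + (ENNReal.ofReal (Real.exp c) * (1 - q₂)⁻¹) * (1 - q₃)⁻¹ := by
      calc ∑' m : ℕ, ℙ (An (m + n₁)) ≤ ∑' m : ℕ, g (m + n₁) :=
            ENNReal.tsum_le_tsum fun m => hstep2 (m + n₁) (Nat.le_add_left _ _)
        _ ≤ ∑' n : ℕ, g n := by
            rw [← Summable.sum_add_tsum_nat_add' (f := g) (k := n₁) ENNReal.summable]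
            exact le_add_self
        _ = (1 - q₁)⁻¹ + (ENNReal.ofReal (Real.exp c) * (1 - q₂)⁻¹) * (1 - q₃)⁻¹ := by
            rw [hgdef, ENNReal.tsum_add, ENNReal.tsum_mul_left,
              ENNReal.tsum_geometric, ENNReal.tsum_geometric]
    exact add_le_add h1 h2
  -- convert the constant part to `ofReal`
  have hconst : (n₁ : ℝ≥0∞)
      + ((1 - q₁)⁻¹ + (ENNReal.ofReal (Real.exp c) * (1 - q₂)⁻¹) * (1 - q₃)⁻¹)
      = ENNReal.ofReal ((n₁ : ℝ) + d) := by
    rw [hq₁def, hq₂def, hq₃def, hconv (J / 4) (by linarith), hconv c hcpos,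
      hconv (c * J / 8) (by positivity)]
    rw [hddef]
    rw [ENNReal.ofReal_add (Nat.cast_nonneg n₁) (by positivity)]
    rw [ENNReal.ofReal_natCast]
    congr 1
    rw [ENNReal.ofReal_add (by positivity) (by positivity)]
    congr 1
    rw [ENNReal.ofReal_mul (Real.exp_nonneg _), ENNReal.ofReal_mul (by positivity)]
    ring
  -- final real-number estimate
  have hfinal : (n₁ : ℝ) + d ≤ (32 / (J * μ) + 16 / J + 1 + d) * L := by
    have hn₁lt : (n₁ : ℝ) < 8 * ((k₀:ℝ) + 1) / J + 1 :=
      Nat.ceil_lt_add_one (by positivity)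
    have hk₀lt : (k₀ : ℝ) < 4 * L / μ + 1 := Nat.ceil_lt_add_one (by positivity)
    have hn₁le2 : (n₁ : ℝ) ≤ 8 * (4 * L / μ + 2) / J + 1 := by
      have h8 : 8 * ((k₀:ℝ) + 1) ≤ 8 * (4 * L / μ + 2) := by linarith
      have h9 : 8 * ((k₀:ℝ) + 1) / J ≤ 8 * (4 * L / μ + 2) / J := by gcongr
      linarith
    have hkey : 8 * (4 * L / μ + 2) / J = 32 / (J * μ) * L + 16 / J := by
      rw [← div_div]
      field_simp
      ring
    rw [hkey] at hn₁le2
    have hA : (0:ℝ) ≤ 16 / J := by positivity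
    nlinarith [mul_nonneg hdpos.le (sub_nonneg.2 hL), mul_nonneg hA (sub_nonneg.2 hL), hL]
  -- put the pieces together
  calc (∫⁻ ω, ENNReal.ofReal
      (sInf {t : ℝ | 0 ≤ t ∧ L ≤ ∑ i ∈ Finset.range (N t ω), X i ω}) ∂ℙ)
      ≤ ∑' n : ℕ, ℙ (An n) := hstep1
    _ ≤ (n₁ : ℝ≥0∞)
        + ((1 - q₁)⁻¹ + (ENNReal.ofReal (Real.exp c) * (1 - q₂)⁻¹) * (1 - q₃)⁻¹) := hsum
    _ = ENNReal.ofReal ((n₁ : ℝ) + d) := hconst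
    _ ≤ ENNReal.ofReal ((32 / (J * μ) + 16 / J + 1 + d) * L) :=
        ENNReal.ofReal_le_ofReal hfinal
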